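/- For L > 1, the state defined by the matrix product expression Σ over all pairs of strings (s, s̄) ∈ {0,1}^L × {0,1}^L of Tr[M^{s_1 s̄_1} ··· M^{s_L s̄_L}] |s⟩⊗|s̄⟩, with M^{00} = (1/2)[[1,1],[1,1]], M^{11} = -2[[0,0],[1,0]], and M^{01} = M^{10} = 0, equals Σ_{f ∈ F_L^{PBC}} (-1)^{|f|} |f⟩⊗|f⟩, where F_L^{PBC} is the set of cyclically blockaded binary strings of length L. -/

import Mathlib

/-- Hamming weight of a binary string. -/
def hammingWt {L : ℕ} (f : Fin L → Bool) : ℕ :=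
  (Finset.univ.filter fun i => f i = true).card

/-- Cyclic (PBC) Rydberg blockade condition. -/
def PBCBlockaded {L : ℕ} (s : Fin L → Bool) : Prop :=
  ∀ i j : Fin L, ((j : ℕ) = (i : ℕ) + 1 ∨ ((i : ℕ) = L - 1 ∧ (j : ℕ) = 0)) →
    ¬(s i = true ∧ s j = true)

/-- The MPS matrices: `M^{00} = (1/2)[[1,1],[1,1]]`, `M^{11} = -2[[0,0],[1,0]]`,
`M^{01} = M^{10} = 0`. -/
noncomputable def Mmat : Bool → Bool → Matrix (Fin 2) (Fin 2) ℝ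
  | false, false => !![1/2, 1/2; 1/2, 1/2]
  | true, true => !![0, 0; -2, 0]
  | _, _ => 0

instance {L : ℕ} (s : Fin L → Bool) : Decidable (PBCBlockaded s) := by
  unfold PBCBlockaded; infer_instance

noncomputable section
open Matrix
open Fin.NatCast

def vx : Bool → Fin 2 → ℝ
  | false => ![1, 1]
  | true => ![0, 1]

def vy : Bool → Fin 2 → ℝ
  | false => ![1/2, 1/2]
  | true => ![-2, 0]

def cc (a b : Bool) : ℝ := vy a ⬝ᵥ vx b

lemma Mmat_diag (b : Bool) : Mmat b b = vecMulVec (vx b) (vy b) := by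
  cases b <;> ext i j <;> fin_cases i <;> fin_cases j <;>
    simp [Mmat, vx, vy, vecMulVec_apply] <;> norm_num

lemma vecMulVec_mul_vecMulVec (x y x' y' : Fin 2 → ℝ) :
    vecMulVec x y * vecMulVec x' y' = (y ⬝ᵥ x') • vecMulVec x y' := by
  ext i j
  simp [vecMulVec_apply, Matrix.mul_apply, dotProduct, Finset.mul_sum]
  ring

lemma trace_vecMulVec (x y : Fin 2 → ℝ) : Matrix.trace (vecMulVec x y) = y ⬝ᵥ x := by
  simp [Matrix.trace, vecMulVec_apply, dotProduct, Matrix.diag, mul_comm]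

def NN (b : Bool) : Matrix (Fin 2) (Fin 2) ℝ := Mmat b b

lemma key_prod (g : ℕ → Bool) : ∀ n : ℕ,
    (List.ofFn fun i : Fin (n + 1) => NN (g i.val)).prod =
      (∏ k ∈ Finset.range n, cc (g k) (g (k + 1))) • vecMulVec (vx (g 0)) (vy (g n)) := by
  intro n
  induction n with
  | zero => simp [NN, Mmat_diag]
  | succ n ih =>
    rw [List.ofFn_succ']
    have h1 : (List.ofFn fun i : Fin (n + 1) =>
        (fun i : Fin (n + 2) => NN (g i.val)) (Fin.castSucc i)) =
        (List.ofFn fun i : Fin (n + 1) => NN (g i.val)) := by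
      simp
    rw [List.concat_eq_append, List.prod_append, h1, ih]
    simp only [List.prod_cons, List.prod_nil, mul_one, Fin.val_last]
    rw [NN, Mmat_diag, smul_mul_assoc, vecMulVec_mul_vecMulVec,
      Finset.prod_range_succ, smul_smul]
    rfl

def phi : Bool → ℝ | false => 1 | true => -2
def psi : Bool → ℝ | false => 1 | true => 1/2

lemma cc_eq (a b : Bool) (h : ¬(a = true ∧ b = true)) : cc a b = phi a * psi b := by
  cases a <;> cases b <;> simp_all [cc, phi, psi, vx, vy, dotProduct] <;> norm_num

lemma cc_tt : cc true true = 0 := by simp [cc, vx, vy, dotProduct]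

lemma phi_psi (b : Bool) : psi b * phi b = if b = true then (-1 : ℝ) else 1 := by
  cases b <;> norm_num [phi, psi]

lemma block_iff {L : ℕ} [NeZero L] (f : Fin L → Bool) :
    PBCBlockaded f ↔ ∀ i : Fin L, ¬(f i = true ∧ f (i + 1) = true) := by
  have hL : 0 < L := Nat.pos_of_ne_zero (NeZero.ne L)
  constructor
  · intro h i
    apply h i (i + 1)
    have : ((i + 1 : Fin L) : ℕ) = ((i : ℕ) + 1) % L := by
      simp [Fin.add_def]
    rcases lt_or_ge ((i : ℕ) + 1) L with hlt | hge
    · left; rw [this, Nat.mod_eq_of_lt hlt]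
    · right
      have hi : (i : ℕ) = L - 1 := by omega
      constructor
      · exact hi
      · rw [this, hi]
        have h2 : L - 1 + 1 = L := by omega
        rw [h2, Nat.mod_self]
  · intro h i j hij
    have hj : j = i + 1 := by
      apply Fin.ext
      have : ((i + 1 : Fin L) : ℕ) = ((i : ℕ) + 1) % L := by simp [Fin.add_def]
      rcases hij with h1 | ⟨h1, h2⟩
      · rw [this, h1, Nat.mod_eq_of_lt (h1 ▸ j.isLt)]
      · rw [this, h1, h2]
        have : L - 1 + 1 = L := by omega
        rw [this, Nat.mod_self]
    exact hj ▸ h i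

lemma scalar_lemma {L : ℕ} [NeZero L] (f : Fin L → Bool) :
    (∏ k ∈ Finset.range L, cc (f k) (f (k + 1 : ℕ))) =
      if PBCBlockaded f then (-1 : ℝ) ^ hammingWt f else 0 := by
  have hcast : ∀ k : ℕ, ((k + 1 : ℕ) : Fin L) = (k : Fin L) + 1 := by
    intro k; push_cast; ring
  by_cases hb : PBCBlockaded f
  · rw [if_pos hb]
    rw [block_iff] at hb
    have conv1 : ∀ G : Fin L → ℝ, (∏ k ∈ Finset.range L, G k) = ∏ i : Fin L, G i := by
      intro G
      rw [← Fin.prod_univ_eq_prod_range (fun k => G k) L]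
      exact Finset.prod_congr rfl fun i _ => by rw [Fin.cast_val_eq_self]
    calc (∏ k ∈ Finset.range L, cc (f k) (f (k + 1 : ℕ)))
        = ∏ k ∈ Finset.range L, phi (f k) * psi (f ((k : Fin L) + 1)) := by
          refine Finset.prod_congr rfl fun k _ => ?_
          rw [hcast k]; exact cc_eq _ _ (hb _)
      _ = (∏ i : Fin L, phi (f i)) * ∏ i : Fin L, psi (f (i + 1)) := by
          rw [Finset.prod_mul_distrib, conv1 (fun i => phi (f i)),
            conv1 (fun i => psi (f (i + 1)))]
      _ = (∏ i : Fin L, phi (f i)) * ∏ i : Fin L, psi (f i) := by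
          congr 1
          exact Equiv.prod_comp (Equiv.addRight (1 : Fin L)) (fun i => psi (f i))
      _ = ∏ i : Fin L, (if f i = true then (-1 : ℝ) else 1) := by
          rw [← Finset.prod_mul_distrib]
          exact Finset.prod_congr rfl fun i _ => by rw [mul_comm, phi_psi]
      _ = (-1 : ℝ) ^ hammingWt f := by
          rw [Finset.prod_ite, Finset.prod_const, Finset.prod_const, one_pow, mul_one,
            hammingWt]
  · rw [if_neg hb]
    rw [block_iff] at hb
    push_neg at hb
    obtain ⟨i, hi1, hi2⟩ := hb
    refine Finset.prod_eq_zero (Finset.mem_range.2 i.isLt) ?_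
    rw [hcast, Fin.cast_val_eq_self, hi1, hi2, cc_tt]

/-- For `L > 1`, the MPS coefficients `Tr[M^{s_1 t_1} ⋯ M^{s_L t_L}]` equal the coefficients
of `Σ_{f ∈ F_L^{PBC}} (-1)^{|f|} |f⟩⊗|f⟩`. -/
theorem stmt16 (L : ℕ) (hL : 1 < L) :
    (fun p : (Fin L → Bool) × (Fin L → Bool) =>
        Matrix.trace ((List.ofFn fun i => Mmat (p.1 i) (p.2 i)).prod)) =
      (fun p : (Fin L → Bool) × (Fin L → Bool) =>
        if p.1 = p.2 ∧ PBCBlockaded p.1 then (-1 : ℝ) ^ hammingWt p.1 else 0) := by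
  haveI : NeZero L := ⟨by omega⟩
  funext p
  obtain ⟨f, f'⟩ := p
  by_cases h : f = f'
  · subst h
    simp only
    simp only [true_and]
    obtain ⟨n, rfl⟩ : ∃ n, L = n + 1 := ⟨L - 1, by omega⟩
    have hfn : (fun i : Fin (n + 1) => Mmat (f i) (f i)) = fun i => NN (f i.val) := by
      funext i; rw [NN, Fin.cast_val_eq_self]
    rw [hfn, key_prod (fun k => f k) n, Matrix.trace_smul, trace_vecMulVec, smul_eq_mul]
    have hlast : ((n + 1 : ℕ) : Fin (n + 1)) = ((0 : ℕ) : Fin (n + 1)) := by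
      simp
    have : (vy (f ((n : ℕ) : Fin (n+1))) ⬝ᵥ vx (f ((0:ℕ) : Fin (n+1))))
        = cc (f ((n:ℕ) : Fin (n+1))) (f ((n + 1 : ℕ) : Fin (n+1))) := by
      rw [hlast]; rfl
    rw [this, ← Finset.prod_range_succ (fun k => cc (f (k : Fin (n+1))) (f ((k+1 : ℕ) : Fin (n+1)))) n]
    exact scalar_lemma f
  · simp only
    rw [if_neg (fun hc : f = f' ∧ _ => h hc.1)]
    obtain ⟨i, hi⟩ := Function.ne_iff.1 h
    have hz : Mmat (f i) (f' i) = 0 := by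
      cases hf : f i <;> cases hf' : f' i <;> simp_all [Mmat]
    rw [List.prod_eq_zero (by rw [List.mem_ofFn]; exact ⟨i, hz⟩), Matrix.trace_zero]

end
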